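/- Let V be the inverse of x ↦ 1/ν̄(x) where ν̄ is a tail satisfying ν̄(x) ~ γH̄(x) as x → ∞ with H̄(x) = exp{-∫₁^x du/(u^{1-α}L_α(u))}, 0 < α < 1, L_α slowly varying with L_α'(x) = o(L_α(x)/x). Then for every t > 0, (V(tx) - V(x))/h(V(x)) → log t as x → ∞, where h(u) = u^{1-α}L_α(u). -/

import Mathlib

open Real Filter MeasureTheory


lemma inv_h_intble {h : ℝ → ℝ} (hpos : ∀ u, 1 ≤ u → 0 < h u)
    (hcont : ContinuousOn h (Set.Ici 1)) {a b : ℝ} (ha : 1 ≤ a) (hb : 1 ≤ b) :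
    IntervalIntegrable (fun u => (h u)⁻¹) MeasureTheory.volume a b := by
  apply ContinuousOn.intervalIntegrable
  have hsub : Set.uIcc a b ⊆ Set.Ici 1 := by
    intro u hu
    have := hu.1
    have h1 : min a b ≤ u := hu.1
    exact le_trans (le_min ha hb) h1
  exact ContinuousOn.inv₀ (hcont.mono hsub) (fun u hu => (hpos u (hsub hu)).ne')

lemma key_lower {h : ℝ → ℝ} (hpos : ∀ u, 1 ≤ u → 0 < h u)
    (hcont : ContinuousOn h (Set.Ici 1)) {X a b : ℝ} (hX : 1 ≤ X) (hXa : X ≤ a) (hab : a ≤ b)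
    (hlip : ∀ u v, X ≤ u → X ≤ v → |h v - h u| ≤ |v - u|) :
    Real.log (1 + (b - a) / h a) ≤ ∫ u in a..b, (h u)⁻¹ := by
  have ha1 : (1:ℝ) ≤ a := hX.trans hXa
  have hapos : 0 < h a := hpos a ha1
  have hFpos : ∀ u ∈ Set.Icc a b, 0 < h a + (u - a) := fun u hu => by
    have := hu.1; linarith
  have hFder : ∀ u ∈ Set.uIcc a b, HasDerivAt (fun v => Real.log (h a + (v - a)))
      ((h a + (u - a))⁻¹) u := by
    intro u hu
    rw [Set.uIcc_of_le hab] at hu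
    have h1 : HasDerivAt (fun v => h a + (v - a)) 1 u := by
      simpa using ((hasDerivAt_id u).sub_const a).const_add (h a)
    simpa using (h1.log (hFpos u hu).ne')
  have hFint : IntervalIntegrable (fun u => (h a + (u - a))⁻¹) MeasureTheory.volume a b := by
    apply ContinuousOn.intervalIntegrable
    apply ContinuousOn.inv₀
    · fun_prop
    · intro u hu
      rw [Set.uIcc_of_le hab] at hu
      exact (hFpos u hu).ne'
  have heq : ∫ u in a..b, (h a + (u - a))⁻¹ = Real.log (1 + (b - a) / h a) := by
    rw [intervalIntegral.integral_eq_sub_of_hasDerivAt hFder hFint]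
    have hnum : 0 < h a + (b - a) := by linarith
    rw [show (1 + (b - a) / h a) = (h a + (b - a)) / h a by field_simp]
    rw [Real.log_div hnum.ne' hapos.ne']
    simp
  rw [← heq]
  apply intervalIntegral.integral_mono_on hab hFint
    (inv_h_intble hpos hcont ha1 (ha1.trans hab))
  intro u hu
  have hu1 : 1 ≤ u := ha1.trans hu.1
  have hub : h u ≤ h a + (u - a) := by
    have := hlip a u hXa (hXa.trans hu.1)
    rw [abs_of_nonneg (by linarith [hu.1] : (0:ℝ) ≤ u - a)] at this
    have := abs_le.1 this
    linarith [this.1]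
  exact inv_anti₀ (hpos u hu1) hub

set_option maxHeartbeats 1000000 in
lemma core_pi {h : ℝ → ℝ} (hpos : ∀ u, 1 ≤ u → 0 < h u)
    (hcont : ContinuousOn h (Set.Ici 1))
    (hlip : ∀ ε : ℝ, 0 < ε → ∃ X : ℝ, 1 ≤ X ∧ ∀ u v, X ≤ u → X ≤ v →
      |h v - h u| ≤ ε * |v - u|)
    (c : ℝ) (y z : ℝ → ℝ) (hy : Tendsto y atTop atTop) (hz : Tendsto z atTop atTop)
    (hD : Tendsto (fun x => ∫ u in y x..z x, (h u)⁻¹) atTop (nhds c)) :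
    Tendsto (fun x => (z x - y x) / h (y x)) atTop (nhds c) := by
  set M : ℝ := |c| + 1 with hM
  set K : ℝ := Real.exp M with hK
  have hKpos : 0 < K := Real.exp_pos M
  obtain ⟨X₁, hX₁1, hlip₁⟩ := hlip 1 one_pos
  have hlip₁' : ∀ u v, X₁ ≤ u → X₁ ≤ v → |h v - h u| ≤ |v - u| := by
    intro u v hu hv; simpa using hlip₁ u v hu hv
  -- eventual boundedness of the increment
  have hDM : ∀ᶠ x in atTop, |(∫ u in y x..z x, (h u)⁻¹) - c| ≤ 1 := by
    have := hD.eventually (Metric.ball_mem_nhds c one_pos)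
    filter_upwards [this] with x hx
    rw [Real.dist_eq] at hx; exact hx.le
  have hbound : ∀ᶠ x in atTop, |z x - y x| ≤ K * h (min (y x) (z x)) := by
    filter_upwards [hy.eventually_ge_atTop X₁, hz.eventually_ge_atTop X₁, hDM]
      with x hyx hzx hDx
    have hDabs : |∫ u in y x..z x, (h u)⁻¹| ≤ M := by
      have := abs_sub_abs_le_abs_sub (∫ u in y x..z x, (h u)⁻¹) c
      rw [hM]; linarith [this, hDx]
    rcases le_total (y x) (z x) with hle | hle
    · have hlow := key_lower hpos hcont hX₁1 hyx hle hlip₁'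
      have h1y : (1:ℝ) ≤ y x := hX₁1.trans hyx
      have hhy : 0 < h (y x) := hpos _ h1y
      have hΔ : 0 ≤ (z x - y x) / h (y x) := div_nonneg (by linarith) hhy.le
      have h1Δ : 0 < 1 + (z x - y x) / h (y x) := by linarith
      have : 1 + (z x - y x) / h (y x) ≤ K := by
        rw [hK, ← Real.exp_log h1Δ]
        apply Real.exp_le_exp.2
        calc Real.log (1 + (z x - y x) / h (y x)) ≤ _ := hlow
          _ ≤ M := (le_abs_self _).trans hDabs
      have hmin : min (y x) (z x) = y x := min_eq_left hle
      rw [hmin, abs_of_nonneg (by linarith : (0:ℝ) ≤ z x - y x)]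
      have : (z x - y x) / h (y x) ≤ K := by linarith
      calc z x - y x = (z x - y x) / h (y x) * h (y x) := by field_simp
        _ ≤ K * h (y x) := by nlinarith
    · have hlow := key_lower hpos hcont hX₁1 hzx hle hlip₁'
      have h1z : (1:ℝ) ≤ z x := hX₁1.trans hzx
      have hhz : 0 < h (z x) := hpos _ h1z
      have hflip : (∫ u in z x..y x, (h u)⁻¹) ≤ M := by
        rw [intervalIntegral.integral_symm]
        have := (abs_le.1 hDabs).1
        linarith
      have hΔ : 0 ≤ (y x - z x) / h (z x) := div_nonneg (by linarith) hhz.le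
      have h1Δ : 0 < 1 + (y x - z x) / h (z x) := by linarith
      have : 1 + (y x - z x) / h (z x) ≤ K := by
        rw [hK, ← Real.exp_log h1Δ]
        exact Real.exp_le_exp.2 (hlow.trans hflip)
      have hmin : min (y x) (z x) = z x := min_eq_right hle
      rw [hmin, abs_of_nonpos (by linarith : z x - y x ≤ 0)]
      have : (y x - z x) / h (z x) ≤ K := by linarith
      calc -(z x - y x) = (y x - z x) / h (z x) * h (z x) := by field_simp; ring
        _ ≤ K * h (z x) := by nlinarith
  -- main estimate
  rw [Metric.tendsto_nhds]
  intro ε hε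
  set ε₂ : ℝ := min (1 / (2 * K)) (ε / (2 * (8 * K ^ 2 + 1))) with hε₂def
  have hε₂pos : 0 < ε₂ := lt_min (by positivity) (by positivity)
  obtain ⟨X₂, hX₂1, hlip₂⟩ := hlip ε₂ hε₂pos
  have hDc : ∀ᶠ x in atTop, |(∫ u in y x..z x, (h u)⁻¹) - c| < ε / 2 := by
    have := hD.eventually (Metric.ball_mem_nhds c (by positivity : (0:ℝ) < ε / 2))
    filter_upwards [this] with x hx
    rw [Real.dist_eq] at hx; exact hx
  filter_upwards [hy.eventually_ge_atTop X₂, hz.eventually_ge_atTop X₂, hbound, hDc]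
    with x hyx hzx hbd hDx
  set w : ℝ := min (y x) (z x) with hw
  have hwX : X₂ ≤ w := le_min hyx hzx
  have hw1 : (1:ℝ) ≤ w := hX₂1.trans hwX
  have hwpos : 0 < h w := hpos w hw1
  have h1y : (1:ℝ) ≤ y x := hw1.trans (min_le_left _ _)
  have hεK : ε₂ * K ≤ 1 / 2 := by
    have h1 : ε₂ ≤ 1 / (2 * K) := min_le_left _ _
    rw [le_div_iff₀ (by positivity : (0:ℝ) < 2 * K)] at h1
    nlinarith
  have hmem : ∀ u ∈ Set.uIcc (y x) (z x), X₂ ≤ u ∧ h w / 2 ≤ h u ∧ |u - w| ≤ K * h w := by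
    intro u hu
    have hul : w ≤ u := hu.1
    have hur : u ≤ max (y x) (z x) := hu.2
    have hmaxmin : max (y x) (z x) - min (y x) (z x) = |z x - y x| := by
      rcases le_total (y x) (z x) with hle | hle
      · rw [max_eq_right hle, min_eq_left hle, abs_of_nonneg (by linarith)]
      · rw [max_eq_left hle, min_eq_right hle, abs_of_nonpos (by linarith)]; ring
    have habs : |u - w| ≤ K * h w := by
      rw [abs_of_nonneg (by linarith)]
      have hmw : max (y x) (z x) - w ≤ K * h w := by
        calc max (y x) (z x) - w = |z x - y x| := by rw [hw]; exact hmaxmin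
          _ ≤ K * h w := hbd
      linarith
    refine ⟨hwX.trans hul, ?_, habs⟩
    have := hlip₂ w u hwX (hwX.trans hul)
    have h2 : |h u - h w| ≤ ε₂ * (K * h w) :=
      this.trans (by apply mul_le_mul_of_nonneg_left habs hε₂pos.le)
    have h3 : ε₂ * (K * h w) ≤ h w / 2 := by nlinarith
    have := (abs_le.1 (h2.trans' (le_refl _))).1
    linarith [(abs_le.1 h2).1]
  have hyin : y x ∈ Set.uIcc (y x) (z x) := Set.left_mem_uIcc
  obtain ⟨hyX₂, hhy2, _⟩ := hmem _ hyin
  have hhypos : 0 < h (y x) := hpos _ h1y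
  -- pointwise bound on the integrand difference
  have haux : ∀ u ∈ Set.uIcc (y x) (z x), |(h u)⁻¹ - (h (y x))⁻¹| ≤ 8 * ε₂ * K / h w := by
    intro u hu
    obtain ⟨huX₂, hhu2, habs⟩ := hmem u hu
    have hhu : 0 < h u := lt_of_lt_of_le (by positivity) hhu2
    have hdiff : |h (y x) - h u| ≤ ε₂ * (2 * K * h w) := by
      have := hlip₂ u (y x) huX₂ hyX₂
      refine this.trans ?_
      apply mul_le_mul_of_nonneg_left _ hε₂pos.le
      obtain ⟨_, _, habsy⟩ := hmem _ hyin
      calc |y x - u| ≤ |y x - w| + |w - u| := abs_sub_le _ _ _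
        _ ≤ K * h w + K * h w := by rw [abs_sub_comm w u]; exact add_le_add habsy habs
        _ = 2 * K * h w := by ring
    rw [show (h u)⁻¹ - (h (y x))⁻¹ = (h (y x) - h u) / (h u * h (y x)) by field_simp]
    rw [abs_div, abs_of_pos (by positivity : (0:ℝ) < h u * h (y x))]
    rw [div_le_div_iff₀ (by positivity) (by positivity : (0:ℝ) < h w)]
    have hlb : h w / 2 * (h w / 2) ≤ h u * h (y x) := by nlinarith
    calc |h (y x) - h u| * h w ≤ ε₂ * (2 * K * h w) * h w := by
          apply mul_le_mul_of_nonneg_right hdiff hwpos.le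
      _ = 8 * ε₂ * K * (h w / 2 * (h w / 2)) := by ring
      _ ≤ 8 * ε₂ * K * (h u * h (y x)) := by
          apply mul_le_mul_of_nonneg_left hlb (by positivity)
  -- turn the difference of integrals into a bound
  have hint1 : IntervalIntegrable (fun u => (h u)⁻¹) MeasureTheory.volume (y x) (z x) :=
    inv_h_intble hpos hcont h1y (hw1.trans (min_le_right _ _))
  have hint2 : IntervalIntegrable (fun _ : ℝ => (h (y x))⁻¹) MeasureTheory.volume (y x) (z x) :=
    intervalIntegrable_const
  have hconst : (∫ _ in y x..z x, (h (y x))⁻¹) = (z x - y x) / h (y x) := by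
    rw [intervalIntegral.integral_const, smul_eq_mul, div_eq_mul_inv]
  have hDmΔ : |(∫ u in y x..z x, (h u)⁻¹) - (z x - y x) / h (y x)| ≤ 8 * ε₂ * K ^ 2 := by
    rw [← hconst, ← intervalIntegral.integral_sub hint1 hint2]
    have hnorm := intervalIntegral.norm_integral_le_of_norm_le_const
      (C := 8 * ε₂ * K / h w) (f := fun u => (h u)⁻¹ - (h (y x))⁻¹) (a := y x) (b := z x) ?_
    · rw [Real.norm_eq_abs] at hnorm
      refine hnorm.trans ?_
      have hzy : |z x - y x| ≤ K * h w := hbd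
      calc 8 * ε₂ * K / h w * |z x - y x| ≤ 8 * ε₂ * K / h w * (K * h w) := by
            apply mul_le_mul_of_nonneg_left hzy (by positivity)
        _ = 8 * ε₂ * K ^ 2 := by field_simp
    · intro u hu
      have hu' : u ∈ Set.uIcc (y x) (z x) := Set.uIoc_subset_uIcc hu
      rw [Real.norm_eq_abs]
      exact haux u hu'
  -- finish
  rw [Real.dist_eq]
  have hεsmall : 8 * ε₂ * K ^ 2 < ε / 2 := by
    have h2 : ε₂ ≤ ε / (2 * (8 * K ^ 2 + 1)) := min_le_right _ _
    rw [le_div_iff₀ (by positivity)] at h2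
    nlinarith
  calc |(z x - y x) / h (y x) - c|
      ≤ |(z x - y x) / h (y x) - (∫ u in y x..z x, (h u)⁻¹)|
        + |(∫ u in y x..z x, (h u)⁻¹) - c| := abs_sub_le _ _ _
    _ < ε / 2 + ε / 2 := by
        rw [abs_sub_comm]
        exact add_lt_add (hDmΔ.trans_lt hεsmall) hDx
    _ = ε := by ring

-- `x ^ (-α) * L x → 0` from the derivative condition on `L`
lemma Lsub_rpow {α : ℝ} (hα0 : 0 < α) {L : ℝ → ℝ} (hLpos : ∀ x, 1 ≤ x → 0 < L x)
    (hLdiff : Differentiable ℝ L)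
    (hL' : Tendsto (fun x => deriv L x * x / L x) atTop (nhds 0)) :
    Tendsto (fun x => x ^ (-α : ℝ) * L x) atTop (nhds 0) := by
  -- obtain a threshold where |L'x·x/Lx| ≤ α/2
  have hev : ∀ᶠ x in atTop, |deriv L x * x / L x| ≤ α / 2 := by
    have := hL'.eventually (Metric.ball_mem_nhds 0 (by positivity : (0:ℝ) < α / 2))
    filter_upwards [this] with x hx
    rw [Real.dist_eq, sub_zero] at hx; exact hx.le
  obtain ⟨X₀', hX₀'⟩ := eventually_atTop.1 hev
  set X₀ : ℝ := max X₀' 1 with hX₀def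
  have hX₀1 : (1:ℝ) ≤ X₀ := le_max_right _ _
  -- the function p is monotone on [X₀, ∞)
  set p : ℝ → ℝ := fun x => α / 2 * Real.log x - Real.log (L x) with hp
  have hder : ∀ x ∈ Set.Ioi X₀, HasDerivAt p (α / (2 * x) - deriv L x / L x) x := by
    intro x hx
    have hx1 : (1:ℝ) < x := lt_of_le_of_lt hX₀1 hx
    have hxpos : (0:ℝ) < x := by linarith
    have hLx : 0 < L x := hLpos x hx1.le
    have h1 : HasDerivAt (fun v => α / 2 * Real.log v) (α / 2 * x⁻¹) x :=
      (Real.hasDerivAt_log hxpos.ne').const_mul (α / 2)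
    have h2 : HasDerivAt (fun v => Real.log (L v)) (deriv L x / L x) x := by
      simpa [div_eq_mul_inv] using ((hLdiff x).hasDerivAt.log hLx.ne')
    have := h1.sub h2
    rw [show α / (2 * x) = α / 2 * x⁻¹ by ring]
    exact this
  have hmono : MonotoneOn p (Set.Ici X₀) := by
    apply monotoneOn_of_deriv_nonneg (convex_Ici X₀)
    · apply ContinuousOn.sub
      · exact (Real.continuousOn_log.mono (by
          intro u hu; simp only [Set.mem_compl_iff, Set.mem_singleton_iff]
          have : (1:ℝ) ≤ u := hX₀1.trans hu
          intro h0; rw [h0] at this; norm_num at this)).const_smul (α/2) |>.congr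
          (by intro u hu; simp [smul_eq_mul])
      · apply Real.continuousOn_log.comp hLdiff.continuous.continuousOn
        intro u hu
        exact (hLpos u (hX₀1.trans hu)).ne'
    · rw [interior_Ici]
      intro x hx
      exact ((hder x hx).differentiableAt).differentiableWithinAt
    · rw [interior_Ici]
      intro x hx
      rw [(hder x hx).deriv]
      have hx1 : (1:ℝ) < x := lt_of_le_of_lt hX₀1 hx
      have hxpos : (0:ℝ) < x := by linarith
      have hLx : 0 < L x := hLpos x hx1.le
      have hb := hX₀' x (le_trans (le_max_left _ _) (le_of_lt hx))
      have hb1 : deriv L x * x / L x ≤ α / 2 := (abs_le.1 hb).2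
      have : deriv L x / L x ≤ α / (2 * x) := by
        rw [div_le_div_iff₀ hLx (by positivity)]
        have := mul_le_mul_of_nonneg_right hb1 hLx.le
        rw [div_mul_eq_mul_div, mul_div_assoc, div_self hLx.ne', mul_one] at this
        nlinarith
      linarith
  -- conclude L x ≤ C x^{α/2}
  set C : ℝ := Real.exp (Real.log (L X₀) - α / 2 * Real.log X₀) with hC
  have hCpos : 0 < C := Real.exp_pos _
  have hLle : ∀ x, X₀ ≤ x → L x ≤ C * x ^ (α / 2 : ℝ) := by
    intro x hx
    have hx1 : (1:ℝ) ≤ x := hX₀1.trans hx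
    have hxpos : (0:ℝ) < x := by linarith
    have hLx : 0 < L x := hLpos x hx1
    have := hmono (Set.self_mem_Ici) hx hx
    simp only [hp] at this
    have hlog : Real.log (L x) ≤ Real.log (L X₀) - α / 2 * Real.log X₀ + α / 2 * Real.log x := by
      linarith
    calc L x = Real.exp (Real.log (L x)) := (Real.exp_log hLx).symm
      _ ≤ Real.exp (Real.log (L X₀) - α / 2 * Real.log X₀ + α / 2 * Real.log x) :=
        Real.exp_le_exp.2 hlog
      _ = C * x ^ (α / 2 : ℝ) := by
        rw [Real.exp_add, hC, Real.rpow_def_of_pos hxpos]; ring_nf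
  -- squeeze
  have hub : ∀ᶠ x in atTop, x ^ (-α : ℝ) * L x ≤ C * x ^ (-(α / 2) : ℝ) := by
    filter_upwards [eventually_ge_atTop X₀, eventually_ge_atTop (1:ℝ)] with x hx hx1
    have hxpos : (0:ℝ) < x := by linarith
    calc x ^ (-α : ℝ) * L x ≤ x ^ (-α : ℝ) * (C * x ^ (α / 2 : ℝ)) := by
          apply mul_le_mul_of_nonneg_left (hLle x hx) (by positivity)
      _ = C * x ^ (-(α / 2) : ℝ) := by
          rw [show (-(α/2) : ℝ) = -α + α / 2 by ring, Real.rpow_add hxpos]; ring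
  have hlb : ∀ᶠ x in atTop, 0 ≤ x ^ (-α : ℝ) * L x := by
    filter_upwards [eventually_ge_atTop (1:ℝ)] with x hx1
    have := hLpos x hx1
    positivity
  have htop : Tendsto (fun x : ℝ => C * x ^ (-(α / 2) : ℝ)) atTop (nhds 0) := by
    have := (tendsto_rpow_neg_atTop (by positivity : (0:ℝ) < α / 2)).const_mul C
    simpa using this
  exact tendsto_of_tendsto_of_tendsto_of_le_of_le' tendsto_const_nhds htop hlb hub

lemma h_lip {α : ℝ} (hα0 : 0 < α) (hα1 : α < 1) {L : ℝ → ℝ}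
    (hLpos : ∀ x, 1 ≤ x → 0 < L x) (hLdiff : Differentiable ℝ L)
    (hL' : Tendsto (fun x => deriv L x * x / L x) atTop (nhds 0)) :
    ∀ ε : ℝ, 0 < ε → ∃ X : ℝ, 1 ≤ X ∧ ∀ u v, X ≤ u → X ≤ v →
      |u ^ (1 - α : ℝ) * L u - v ^ (1 - α : ℝ) * L v| ≤ ε * |u - v| := by
  set g : ℝ → ℝ := fun u => (1 - α) * u ^ (-α : ℝ) * L u + u ^ (1 - α : ℝ) * deriv L u with hg
  have hA := Lsub_rpow hα0 hLpos hLdiff hL'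
  have hg0 : Tendsto g atTop (nhds 0) := by
    have heq : ∀ᶠ u in atTop, (1 - α) * (u ^ (-α : ℝ) * L u)
        + (u ^ (-α : ℝ) * L u) * (deriv L u * u / L u) = g u := by
      filter_upwards [eventually_ge_atTop (1:ℝ)] with u hu
      have hupos : (0:ℝ) < u := lt_of_lt_of_le one_pos hu
      have hLu : L u ≠ 0 := (hLpos u hu).ne'
      have hpow : u ^ (-α : ℝ) * u = u ^ (1 - α : ℝ) := by
        rw [show (1 - α : ℝ) = -α + 1 by ring, Real.rpow_add hupos, Real.rpow_one]
      rw [hg]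
      field_simp
      ring_nf
      rw [← hpow]
      ring
    have hlim : Tendsto (fun u => (1 - α) * (u ^ (-α : ℝ) * L u)
        + (u ^ (-α : ℝ) * L u) * (deriv L u * u / L u)) atTop (nhds 0) := by
      have := ((hA.const_mul (1 - α)).add (hA.mul hL'))
      simpa using this
    exact hlim.congr' heq
  intro ε hε
  have hev : ∀ᶠ u in atTop, |g u| ≤ ε := by
    have := hg0.eventually (Metric.ball_mem_nhds 0 hε)
    filter_upwards [this] with u hu
    rw [Real.dist_eq, sub_zero] at hu; exact hu.le
  obtain ⟨X', hX'⟩ := eventually_atTop.1 hev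
  refine ⟨max X' 1, le_max_right _ _, ?_⟩
  have hd : ∀ x ∈ Set.Ici (max X' 1), HasDerivAt (fun u : ℝ => u ^ (1 - α : ℝ) * L u) (g x) x := by
    intro x hx
    have hx1 : (1:ℝ) ≤ x := (le_max_right _ _).trans hx
    have hxpos : (0:ℝ) < x := lt_of_lt_of_le one_pos hx1
    have h1 : HasDerivAt (fun u : ℝ => u ^ (1 - α : ℝ)) ((1 - α) * x ^ ((1 - α : ℝ) - 1)) x :=
      Real.hasDerivAt_rpow_const (Or.inl hxpos.ne')
    have h2 := h1.mul (hLdiff x).hasDerivAt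
    have hrw : (1 - α) * x ^ ((1 - α : ℝ) - 1) * L x + x ^ (1 - α : ℝ) * deriv L x = g x := by
      rw [hg, show ((1 - α : ℝ) - 1) = -α by ring]
    exact hrw ▸ h2
  intro u v hu hv
  have hbound : ∀ x ∈ Set.Ici (max X' 1), ‖g x‖ ≤ ε := by
    intro x hx
    rw [Real.norm_eq_abs]
    exact hX' x ((le_max_left _ _).trans hx)
  have := (convex_Ici (max X' 1)).norm_image_sub_le_of_norm_hasDerivWithin_le
    (fun x hx => (hd x hx).hasDerivWithinAt) hbound hv hu
  simpa [Real.norm_eq_abs] using this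

/-- Π-variation of `V`: if `ν̄` is nonincreasing with `ν̄(x) ~ γH̄(x)` for the
semi-exponential tail `H̄(x) = exp{-∫₁ˣ du/(u^{1-α}L(u))}` and `V` is (eventually)
the inverse of `1/ν̄`, then for every `t > 0`,
`(V(tx) - V(x))/h(V(x)) → log t` as `x → ∞`, with `h(u) = u^{1-α}L(u)`. -/
theorem stmt11 (α γ : ℝ) (hα0 : 0 < α) (hα1 : α < 1) (hγ : 0 < γ)
    (L : ℝ → ℝ) (hLpos : ∀ x, 1 ≤ x → 0 < L x)
    (hLsv : ∀ t : ℝ, 0 < t → Tendsto (fun x => L (t * x) / L x) atTop (nhds 1))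
    (hLdiff : Differentiable ℝ L)
    (hL' : Tendsto (fun x => deriv L x * x / L x) atTop (nhds 0))
    (Hbar h : ℝ → ℝ)
    (hHbar : ∀ x, 1 ≤ x → Hbar x = Real.exp (-∫ u in (1 : ℝ)..x, 1 / (u ^ (1 - α) * L u)))
    (hh : ∀ x, h x = x ^ (1 - α) * L x)
    (nubar V : ℝ → ℝ)
    (hnu_mono : AntitoneOn nubar (Set.Ici 1))
    (hnu_asym : Tendsto (fun x => nubar x / (γ * Hbar x)) atTop (nhds 1))
    (hVinv : ∀ᶠ x in atTop, 1 / nubar (V x) = x)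
    (hVtop : Tendsto V atTop atTop) :
    ∀ t : ℝ, 0 < t →
      Tendsto (fun x => (V (t * x) - V x) / h (V x)) atTop (nhds (Real.log t)) := by
  intro t ht
  have hhfun : h = fun u : ℝ => u ^ (1 - α : ℝ) * L u := funext hh
  have hpos : ∀ u, 1 ≤ u → 0 < h u := by
    intro u hu
    rw [hh]
    exact mul_pos (Real.rpow_pos_of_pos (lt_of_lt_of_le one_pos hu) _) (hLpos u hu)
  have hcont : ContinuousOn h (Set.Ici 1) := by
    rw [hhfun]
    exact (continuousOn_id.rpow_const (fun x hx =>
      Or.inl (ne_of_gt (lt_of_lt_of_le one_pos hx)))).mul hLdiff.continuous.continuousOn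
  have hlip : ∀ ε : ℝ, 0 < ε → ∃ X : ℝ, 1 ≤ X ∧ ∀ u v, X ≤ u → X ≤ v →
      |h v - h u| ≤ ε * |v - u| := by
    intro ε hε
    obtain ⟨X, hX1, hX⟩ := h_lip hα0 hα1 hLpos hLdiff hL' ε hε
    exact ⟨X, hX1, fun u v hu hv => by rw [hh v, hh u]; exact hX v u hv hu⟩
  have hz : Tendsto (fun x => V (t * x)) atTop atTop :=
    hVtop.comp (Tendsto.const_mul_atTop ht tendsto_id)
  set I : ℝ → ℝ := fun b => ∫ u in (1:ℝ)..b, (h u)⁻¹ with hI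
  have hfun_eq : (fun u : ℝ => 1 / (u ^ (1 - α : ℝ) * L u)) = fun u => (h u)⁻¹ := by
    funext u; rw [hh, one_div]
  have hHbar' : ∀ x, 1 ≤ x → Hbar x = Real.exp (-I x) := by
    intro x hx
    rw [hHbar x hx, hI]
    congr 1
    rw [hfun_eq]
  have hratio : Tendsto (fun x => nubar (V x) / (γ * Hbar (V x))) atTop (nhds 1) :=
    hnu_asym.comp hVtop
  have hlog : Tendsto (fun x => Real.log (nubar (V x) / (γ * Hbar (V x)))) atTop (nhds 0) := by
    have := ((Real.continuousAt_log one_ne_zero).tendsto).comp hratio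
    simpa [Function.comp_def] using this
  have hgev : ∀ᶠ x in atTop, Real.log (nubar (V x) / (γ * Hbar (V x)))
      = I (V x) - Real.log x - Real.log γ := by
    filter_upwards [hVinv, hVtop.eventually_ge_atTop 1, eventually_ge_atTop (1:ℝ)]
      with x hinv hV1 hx1
    have hx0 : (0:ℝ) < x := lt_of_lt_of_le one_pos hx1
    have hnval : nubar (V x) = x⁻¹ :=
      inv_eq_iff_eq_inv.mp (by rw [← one_div]; exact hinv)
    have hHv : Hbar (V x) = Real.exp (-I (V x)) := hHbar' _ hV1
    rw [hnval, hHv, Real.log_div (inv_ne_zero hx0.ne') (by positivity), Real.log_inv,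
      Real.log_mul hγ.ne' (Real.exp_ne_zero _), Real.log_exp]
    ring
  have hg : Tendsto (fun x => I (V x) - Real.log x - Real.log γ) atTop (nhds 0) :=
    hlog.congr' hgev
  have hgt : Tendsto (fun x => I (V (t * x)) - Real.log (t * x) - Real.log γ) atTop (nhds 0) :=
    hg.comp (Tendsto.const_mul_atTop ht tendsto_id)
  have hintI : ∀ b, 1 ≤ b → IntervalIntegrable (fun u => (h u)⁻¹) MeasureTheory.volume 1 b :=
    fun b hb => inv_h_intble hpos hcont le_rfl hb
  have hD : Tendsto (fun x => ∫ u in V x..V (t * x), (h u)⁻¹) atTop (nhds (Real.log t)) := by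
    have hev : ∀ᶠ x in atTop, (∫ u in V x..V (t * x), (h u)⁻¹)
        = (I (V (t * x)) - Real.log (t * x) - Real.log γ)
          - (I (V x) - Real.log x - Real.log γ) + Real.log t := by
      filter_upwards [hVtop.eventually_ge_atTop 1, hz.eventually_ge_atTop 1,
        eventually_gt_atTop (0:ℝ)] with x hV1 hVt1 hx0
      have hsplit : I (V (t * x)) - I (V x) = ∫ u in V x..V (t * x), (h u)⁻¹ :=
        intervalIntegral.integral_interval_sub_left (hintI _ hVt1) (hintI _ hV1)
      have hlmul : Real.log (t * x) = Real.log t + Real.log x := Real.log_mul ht.ne' hx0.ne'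
      rw [← hsplit, hlmul]; ring
    have hlim : Tendsto (fun x => (I (V (t * x)) - Real.log (t * x) - Real.log γ)
        - (I (V x) - Real.log x - Real.log γ) + Real.log t) atTop (nhds (Real.log t)) := by
      have := (hgt.sub hg).add (tendsto_const_nhds (x := Real.log t))
      simpa using this
    exact hlim.congr' (by filter_upwards [hev] with x hx; rw [hx])
  exact core_pi hpos hcont hlip (Real.log t) V (fun x => V (t * x)) hVtop hz hD
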